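/- Let X be a nonempty finite design space, let p and s be natural numbers with 0 < s < p, let m : X → Matrix (Fin p) (Fin p) ℝ, and let A : Matrix (Fin p) (Fin s) ℝ have rank s. Let w be a design (w(x) ≥ 0, ∑_{x∈X} w(x) = 1) such that M(w) = ∑_{x∈X} w(x) • m(x) is symmetric positive definite. Then ∑_{x ∈ X} w(x) * trace(M(w)⁻¹ * A * (Aᵀ * M(w)⁻¹ * A)⁻¹ * Aᵀ * M(w)⁻¹ * m(x)) = s. -/

import Mathlib

open Matrix BigOperators

lemma mulVec_injective_of_rank {p s : ℕ} (A : Matrix (Fin p) (Fin s) ℝ)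
    (hA : A.rank = s) : Function.Injective A.mulVec := by
  have h := A.mulVecLin.finrank_range_add_finrank_ker
  rw [show Module.finrank ℝ (LinearMap.range A.mulVecLin) = A.rank from rfl, hA,
    Module.finrank_fin_fun] at h
  have hk : Module.finrank ℝ (LinearMap.ker A.mulVecLin) = 0 := by omega
  have : LinearMap.ker A.mulVecLin = ⊥ := Submodule.finrank_eq_zero.mp hk
  have hinj : Function.Injective A.mulVecLin := LinearMap.ker_eq_bot.mp this
  exact hinj

lemma posDef_conj {p s : ℕ} {M : Matrix (Fin p) (Fin p) ℝ} (hM : M.PosDef)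
    (A : Matrix (Fin p) (Fin s) ℝ) (hA : Function.Injective A.mulVec) :
    (Aᵀ * M * A).PosDef := by
  refine PosDef.of_dotProduct_mulVec_pos ?_ ?_
  · have := isHermitian_conjTranspose_mul_mul A hM.isHermitian
    simpa using this
  · intro x hx
    have hAx : A.mulVec x ≠ 0 := fun h => hx (hA (by simpa using h))
    have := hM.dotProduct_mulVec_pos hAx
    simpa [dotProduct_mulVec, ← Matrix.vecMul_vecMul, Matrix.vecMul_transpose,
      Matrix.mul_assoc] using this

/-- Averaging identity: the mean of the sensitivity function of the
`D_A`-criterion under the design equals `s`. -/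
theorem DA_sensitivity_average
    {X : Type*} [Fintype X] [Nonempty X] (p s : ℕ) (hs : 0 < s) (hsp : s < p)
    (m : X → Matrix (Fin p) (Fin p) ℝ)
    (A : Matrix (Fin p) (Fin s) ℝ) (hA : A.rank = s)
    (w : X → ℝ) (hw0 : ∀ x, 0 ≤ w x) (hw1 : ∑ x, w x = 1)
    (hM : (∑ x, w x • m x).PosDef) :
    ∑ x, w x *
        ((∑ y, w y • m y)⁻¹ * A * (Aᵀ * (∑ y, w y • m y)⁻¹ * A)⁻¹ * Aᵀ *
            (∑ y, w y • m y)⁻¹ * m x).trace = (s : ℝ) := by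
  set M : Matrix (Fin p) (Fin p) ℝ := ∑ x, w x • m x with hMdef
  set C : Matrix (Fin p) (Fin p) ℝ := M⁻¹ * A * (Aᵀ * M⁻¹ * A)⁻¹ * Aᵀ * M⁻¹ with hCdef
  have hinj := mulVec_injective_of_rank A hA
  have hB : (Aᵀ * M⁻¹ * A).PosDef := by
    have := posDef_conj hM.inv A hinj
    simpa [Matrix.mul_assoc] using this
  have key : ∑ x, w x * (C * m x).trace = (C * M).trace := by
    rw [hMdef, Finset.mul_sum, trace_sum]
    congr 1; ext x
    rw [Matrix.mul_smul, trace_smul, smul_eq_mul]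
  calc ∑ x, w x * (C * m x).trace = (C * M).trace := key
    _ = (s : ℝ) := by
        have hMM : M⁻¹ * M = 1 := nonsing_inv_mul M hM.det_pos.ne'.isUnit
        have hCM : C * M = M⁻¹ * A * (Aᵀ * M⁻¹ * A)⁻¹ * Aᵀ := by
          rw [hCdef]
          rw [Matrix.mul_assoc (M⁻¹ * A * (Aᵀ * M⁻¹ * A)⁻¹ * Aᵀ) M⁻¹ M, hMM, Matrix.mul_one]
        rw [hCM, trace_mul_comm (M⁻¹ * A * (Aᵀ * M⁻¹ * A)⁻¹) Aᵀ]
        have : Aᵀ * (M⁻¹ * A * (Aᵀ * M⁻¹ * A)⁻¹) = (Aᵀ * M⁻¹ * A) * (Aᵀ * M⁻¹ * A)⁻¹ := by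
          simp [Matrix.mul_assoc]
        rw [this, Matrix.mul_nonsing_inv _ hB.det_pos.ne'.isUnit]
        simp [trace_one]
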